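/- For all x, y ∈ G₁ and X, Y ∈ G₂: β_x ∘ β_X ∘ β_y ∘ β_Y = Ad( β_x(ṽ(X,y)) ) ∘ β_{xy} ∘ β_{XY}. Equivalently, setting β̂_{xX} := β_x ∘ β_X and v̂(xX, yY) := β_x(ṽ(X,y)), the pair (β̂, v̂) satisfies β̂_{xX} ∘ β̂_{yY} = Ad(v̂(xX,yY)) ∘ β̂_{(xy)(XY)}, so (β, v) is exterior equivalent to (β̂, v̂). -/

import Mathlib

/-- **setting of Theorem 8.1.**  `G = G₁ × G₂` abelian, `(β, v)` a twisted
action on the unital C*-algebra `A` with deformed cocycle condition governed by an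
antisymmetric tricharacter `φ`, with `v` trivial on each subgroup and `φ` trivial whenever
two arguments lie in `G₂` or all three lie in `G₁`; `ṽ(ξ,η) := v(ξ,η) (v(η,ξ))*`.  Then for
`x, y ∈ G₁`, `X, Y ∈ G₂`:
`β_x ∘ β_X ∘ β_y ∘ β_Y = Ad(β_x(ṽ(X,y))) ∘ β_{xy} ∘ β_{XY}`, i.e. `(β, v)` is exterior
equivalent to `(β̂, v̂)` where `β̂_{xX} = β_x ∘ β_X` and `v̂(xX,yY) = β_x(ṽ(X,y))`. -/
theorem beta_hat_exterior_equivalent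
    {A : Type*} [NormedRing A] [StarRing A] [CStarRing A] [NormedAlgebra ℂ A]
    [CompleteSpace A] [StarModule ℂ A]
    {G₁ G₂ : Type*} [CommGroup G₁] [CommGroup G₂]
    (β : G₁ × G₂ → (A ≃⋆ₐ[ℂ] A)) (v : G₁ × G₂ → G₁ × G₂ → unitary A)
    (htw : ∀ ξ η (a : A), β ξ (β η a) = (v ξ η : A) * β (ξ * η) a * star ((v ξ η : A)))
    (φ : G₁ × G₂ → G₁ × G₂ → G₁ × G₂ → ℂ)
    (hφabs : ∀ ξ η ζ, ‖φ ξ η ζ‖ = 1)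
    (hmul₁ : ∀ ξ ξ' η ζ, φ (ξ * ξ') η ζ = φ ξ η ζ * φ ξ' η ζ)
    (hmul₂ : ∀ ξ η η' ζ, φ ξ (η * η') ζ = φ ξ η ζ * φ ξ η' ζ)
    (hmul₃ : ∀ ξ η ζ ζ', φ ξ η (ζ * ζ') = φ ξ η ζ * φ ξ η ζ')
    (hswap₁₂ : ∀ ξ η ζ, φ η ξ ζ = (φ ξ η ζ)⁻¹)
    (hswap₂₃ : ∀ ξ η ζ, φ ξ ζ η = (φ ξ η ζ)⁻¹)
    (hcoc : ∀ ξ η ζ, (v ξ η : A) * (v (ξ * η) ζ : A)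
      = φ ξ η ζ • (β ξ ((v η ζ : A)) * (v ξ (η * ζ) : A)))
    (hv₁ : ∀ x y : G₁, v (x, 1) (y, 1) = 1)
    (hv₂ : ∀ X Y : G₂, v ((1 : G₁), X) (1, Y) = 1)
    (hφG₁ : ∀ x y z : G₁, φ (x, 1) (y, 1) (z, 1) = 1)
    (hφG₂ : ∀ (ξ : G₁ × G₂) (X Y : G₂),
      φ ξ ((1 : G₁), X) (1, Y) = 1 ∧ φ ((1 : G₁), X) ξ (1, Y) = 1 ∧
        φ ((1 : G₁), X) ((1 : G₁), Y) ξ = 1)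
    (vt : G₁ × G₂ → G₁ × G₂ → A)
    (hvt : ∀ ξ η, vt ξ η = (v ξ η : A) * star ((v η ξ : A))) :
    ∀ (x y : G₁) (X Y : G₂) (a : A),
      β (x, 1) (β (1, X) (β (y, 1) (β (1, Y) a)))
        = β (x, 1) (vt (1, X) (y, 1)) * β (x * y, 1) (β (1, X * Y) a)
            * star (β (x, 1) (vt (1, X) (y, 1))) := by
  intro x y X Y a
  set u : A := (v (1, X) (y, 1) : A) with hu
  set w : A := (v (y, 1) ((1 : G₁), X) : A) with hwdef
  have hw : star w * w = 1 := by
    simpa [hwdef] using unitary.coe_star_mul_self (v (y, 1) ((1 : G₁), X))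
  -- collapse β_X ∘ β_Y
  have hXY : β ((1 : G₁), X) (β (1, Y) a) = β ((1 : G₁), X * Y) a := by
    have h := htw ((1 : G₁), X) (1, Y) a
    simpa [hv₂, Prod.mk_mul_mk] using h
  -- collapse β_x ∘ β_y
  have hxy : ∀ e : A, β (x, (1 : G₂)) (β (y, 1) e) = β (x * y, (1 : G₂)) e := by
    intro e
    have h := htw (x, (1 : G₂)) (y, 1) e
    simpa [hv₁, Prod.mk_mul_mk] using h
  -- commute β_X past β_y
  have h2 : ∀ b : A, β (y, X) b = star w * (β (y, 1) (β ((1 : G₁), X) b)) * w := by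
    intro b
    have h := htw (y, (1 : G₂)) ((1 : G₁), X) b
    have hp : (y, (1 : G₂)) * ((1 : G₁), X) = (y, X) := by
      simp [Prod.mk_mul_mk]
    rw [hp] at h
    rw [h]
    symm
    calc star w * (w * β (y, X) b * star w) * w
        = (star w * w) * β (y, X) b * (star w * w) := by
          simp only [mul_assoc]
      _ = β (y, X) b := by rw [hw]; simp
  have h1 : β ((1 : G₁), X) (β (y, 1) (β (1, Y) a))
      = u * (star w * (β (y, 1) (β ((1 : G₁), X) (β (1, Y) a))) * w) * star u := by
    have h := htw ((1 : G₁), X) (y, (1 : G₂)) (β (1, Y) a)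
    have hp : ((1 : G₁), X) * (y, (1 : G₂)) = (y, X) := by
      simp [Prod.mk_mul_mk]
    rw [hp] at h
    rw [h, h2]
  rw [h1, hXY, hvt]
  simp only [map_mul, map_star]
  rw [hxy]
  simp only [mul_assoc, star_mul, star_star]
  rfl
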